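/- Let m ≥ 2 be an even integer, let f : ℝ → ℝ be (m+3) times continuously differentiable, and let x ∈ ℝ. Suppose the real coefficients α, a, b satisfy 1 + 2α = a + b and, for every integer l with 1 ≤ l ≤ m/2 − 1, 2α/(2l)! = [2a(2^{2(l+1)} − 1) + (3/4)b(3^{2(l+1)} − 1)]/(2l+3)!. Define for h ≠ 0 the truncation error E(h) = α(f'''(x−h) + f'''(x+h)) + f'''(x) − a·(f(x+2h) − f(x−2h) − 2(f(x+h) − f(x−h)))/(2h³) − b·(f(x+3h) − f(x−3h) − 3(f(x+h) − f(x−h)))/(8h³). Then E(h) = O(h^m) as h → 0; i.e. the compact third-derivative scheme has order m. -/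

import Mathlib

open Finset Set

lemma mvt_bound {r C : ℝ} (hC : 0 ≤ C) (n : ℕ) (g : ℝ → ℝ) (hg : Differentiable ℝ g)
    (hg0 : g 0 = 0) (hb : ∀ t : ℝ, |t| ≤ r → |deriv g t| ≤ C * |t| ^ n) :
    ∀ h : ℝ, |h| ≤ r → |g h| ≤ C * |h| ^ (n + 1) := by
  intro h hh
  have key := Convex.norm_image_sub_le_of_norm_deriv_le (s := Set.uIcc 0 h)
    (f := g) (C := C * |h| ^ n)
    (fun t _ => (hg t))
    (fun t ht => by
      have h1 : |t| ≤ |h| := by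
        rcases Set.mem_uIcc.1 ht with ⟨h1, h2⟩ | ⟨h1, h2⟩ <;>
          · rw [abs_le]
            constructor <;> nlinarith [le_abs_self h, neg_abs_le h]
      calc ‖deriv g t‖ = |deriv g t| := rfl
        _ ≤ C * |t| ^ n := hb t (h1.trans hh)
        _ ≤ C * |h| ^ n := by gcongr)
    (convex_uIcc 0 h) (Set.left_mem_uIcc) (Set.right_mem_uIcc)
  simp only [hg0, sub_zero, Real.norm_eq_abs] at key
  calc |g h| ≤ C * |h| ^ n * |h| := key
    _ = C * |h| ^ (n + 1) := by ring


lemma deriv_remainder (n : ℕ) (f : ℝ → ℝ) (hf : ContDiff ℝ (n+1 : ℕ) f) (x : ℝ) (t : ℝ) :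
    HasDerivAt (fun h : ℝ => f (x + h) - ∑ k ∈ Finset.range (n+1),
        iteratedDeriv k f x * h ^ k / (Nat.factorial k : ℝ))
      (deriv f (x + t) - ∑ j ∈ Finset.range n,
        iteratedDeriv j (deriv f) x * t ^ j / (Nat.factorial j : ℝ)) t := by
  have hdf : Differentiable ℝ f := hf.differentiable (by norm_cast)
  have h1 : HasDerivAt (fun h : ℝ => f (x + h)) (deriv f (x + t)) t := by
    simpa [Function.comp_def] using ((hdf (x + t)).hasDerivAt).comp t ((hasDerivAt_id t).const_add x)
  have h2 : HasDerivAt (fun h : ℝ => ∑ k ∈ Finset.range (n+1),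
      iteratedDeriv k f x * h ^ k / (Nat.factorial k : ℝ))
      (∑ k ∈ Finset.range (n+1),
        iteratedDeriv k f x * ((k : ℝ) * t ^ (k-1)) / (Nat.factorial k : ℝ)) t := by
    refine HasDerivAt.fun_sum (fun k _ => ?_)
    simpa [mul_div_assoc, div_mul_eq_mul_div] using
      ((hasDerivAt_pow k t).const_mul (iteratedDeriv k f x)).div_const (Nat.factorial k : ℝ)
  have h3 : (∑ k ∈ Finset.range (n+1),
        iteratedDeriv k f x * ((k : ℝ) * t ^ (k-1)) / (Nat.factorial k : ℝ))
      = ∑ j ∈ Finset.range n, iteratedDeriv j (deriv f) x * t ^ j / (Nat.factorial j : ℝ) := by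
    rw [Finset.sum_range_succ']
    simp only [Nat.cast_zero, zero_mul, mul_zero, zero_div, add_zero]
    refine Finset.sum_congr rfl (fun j _ => ?_)
    rw [← iteratedDeriv_succ']
    have : (Nat.factorial (j+1) : ℝ) = (j+1) * (Nat.factorial j : ℝ) := by
      push_cast [Nat.factorial_succ]; ring
    rw [this]
    have hj : (Nat.factorial j : ℝ) ≠ 0 := by positivity
    field_simp
    push_cast [Nat.add_sub_cancel, Nat.add_sub_cancel_left]
    ring
  rw [← h3]
  exact h1.sub h2

lemma taylor_bound (r : ℝ) (hr : 0 < r) (x : ℝ) :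
    ∀ (n : ℕ) (f : ℝ → ℝ), ContDiff ℝ (n+1 : ℕ) f →
    ∃ C, 0 ≤ C ∧ ∀ h : ℝ, |h| ≤ r →
      |f (x + h) - ∑ k ∈ Finset.range (n+1),
        iteratedDeriv k f x * h ^ k / (Nat.factorial k : ℝ)| ≤ C * |h| ^ (n+1) := by
  intro n
  induction n with
  | zero =>
    intro f hf
    have hcont : Continuous fun t => |deriv f (x + t)| :=
      ((hf.continuous_deriv le_rfl).comp (by continuity)).abs
    obtain ⟨C, hC⟩ := (isCompact_Icc (a := -r) (b := r)).exists_bound_of_continuousOn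
      (hcont.continuousOn)
    have hC0 : 0 ≤ C := le_trans (abs_nonneg _) (by simpa using hC 0 (by constructor <;> linarith))
    refine ⟨C, hC0, ?_⟩
    have := mvt_bound (r := r) hC0 0 (fun h => f (x + h) - ∑ k ∈ Finset.range 1,
        iteratedDeriv k f x * h ^ k / (Nat.factorial k : ℝ))
      (fun t => (deriv_remainder 0 f hf x t).differentiableAt)
      (by simp)
      (fun t ht => by
        rw [(deriv_remainder 0 f hf x t).deriv]
        simpa using hC (x + t - x) (by rw [abs_le] at ht; constructor <;> simp <;> linarith))
    simpa using this
  | succ n ih =>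
    intro f hf
    have hdf : ContDiff ℝ (n+1 : ℕ) (deriv f) := by
      have := (contDiff_succ_iff_deriv (n := (n+1 : ℕ))).1 (by exact_mod_cast hf)
      exact this.2.2
    obtain ⟨C, hC0, hC⟩ := ih (deriv f) hdf
    refine ⟨C, hC0, ?_⟩
    have := mvt_bound (r := r) hC0 (n+1) (fun h => f (x + h) - ∑ k ∈ Finset.range (n+2),
        iteratedDeriv k f x * h ^ k / (Nat.factorial k : ℝ))
      (fun t => (deriv_remainder (n+1) f (by exact_mod_cast hf) x t).differentiableAt)
      (by
        show f (x + 0) - _ = 0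
        rw [Finset.sum_eq_single_of_mem 0 (Finset.mem_range.2 (Nat.succ_pos _))
          (fun b _ hb => by simp [zero_pow hb])]
        simp)
      (fun t ht => by
        rw [(deriv_remainder (n+1) f (by exact_mod_cast hf) x t).deriv]
        exact hC t ht)
    exact this

lemma iteratedDeriv_comp' (j k : ℕ) (f : ℝ → ℝ) :
    iteratedDeriv j (iteratedDeriv k f) = iteratedDeriv (j + k) f := by
  induction j with
  | zero => simp
  | succ j ih =>
    rw [iteratedDeriv_succ, ih, show j + 1 + k = (j + k) + 1 from by omega, iteratedDeriv_succ]

-- the key polynomial/coefficient identity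
lemma key_ident (m : ℕ) (hm : 2 ≤ m) (hmeven : Even m)
    (α a b : ℝ) (hcond0 : 1 + 2 * α = a + b)
    (hcond : ∀ l : ℕ, 1 ≤ l → l ≤ m / 2 - 1 →
      2 * α / (Nat.factorial (2 * l) : ℝ) =
        (2 * a * ((2 : ℝ) ^ (2 * (l + 1)) - 1)
            + (3 / 4) * b * ((3 : ℝ) ^ (2 * (l + 1)) - 1)) /
          (Nat.factorial (2 * l + 3) : ℝ))
    (D : ℕ → ℝ) (h : ℝ) :
    α * h ^ 3 * ((∑ j ∈ range m, D (3 + j) * (-h) ^ j / (Nat.factorial j : ℝ))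
        + ∑ j ∈ range m, D (3 + j) * h ^ j / (Nat.factorial j : ℝ)) + h ^ 3 * D 3
      = a / 2 * ((∑ k ∈ range (m + 3), D k / (Nat.factorial k : ℝ) * ((2:ℝ) ^ k * h ^ k))
            - (∑ k ∈ range (m + 3), D k / (Nat.factorial k : ℝ) * ((-2:ℝ) ^ k * h ^ k))
            - 2 * ((∑ k ∈ range (m + 3), D k / (Nat.factorial k : ℝ) * ((1:ℝ) ^ k * h ^ k))
              - ∑ k ∈ range (m + 3), D k / (Nat.factorial k : ℝ) * ((-1:ℝ) ^ k * h ^ k)))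
        + b / 8 * ((∑ k ∈ range (m + 3), D k / (Nat.factorial k : ℝ) * ((3:ℝ) ^ k * h ^ k))
            - (∑ k ∈ range (m + 3), D k / (Nat.factorial k : ℝ) * ((-3:ℝ) ^ k * h ^ k))
            - 3 * ((∑ k ∈ range (m + 3), D k / (Nat.factorial k : ℝ) * ((1:ℝ) ^ k * h ^ k))
              - ∑ k ∈ range (m + 3), D k / (Nat.factorial k : ℝ) * ((-1:ℝ) ^ k * h ^ k))) := by
  -- combine RHS into a single sum
  have hR : (a / 2 * ((∑ k ∈ range (m + 3), D k / (Nat.factorial k : ℝ) * ((2:ℝ) ^ k * h ^ k))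
            - (∑ k ∈ range (m + 3), D k / (Nat.factorial k : ℝ) * ((-2:ℝ) ^ k * h ^ k))
            - 2 * ((∑ k ∈ range (m + 3), D k / (Nat.factorial k : ℝ) * ((1:ℝ) ^ k * h ^ k))
              - ∑ k ∈ range (m + 3), D k / (Nat.factorial k : ℝ) * ((-1:ℝ) ^ k * h ^ k)))
        + b / 8 * ((∑ k ∈ range (m + 3), D k / (Nat.factorial k : ℝ) * ((3:ℝ) ^ k * h ^ k))
            - (∑ k ∈ range (m + 3), D k / (Nat.factorial k : ℝ) * ((-3:ℝ) ^ k * h ^ k))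
            - 3 * ((∑ k ∈ range (m + 3), D k / (Nat.factorial k : ℝ) * ((1:ℝ) ^ k * h ^ k))
              - ∑ k ∈ range (m + 3), D k / (Nat.factorial k : ℝ) * ((-1:ℝ) ^ k * h ^ k))))
      = ∑ k ∈ range (m + 3), D k / (Nat.factorial k : ℝ) *
          (a / 2 * ((2:ℝ) ^ k - (-2:ℝ) ^ k - 2 * ((1:ℝ) ^ k - (-1:ℝ) ^ k))
            + b / 8 * ((3:ℝ) ^ k - (-3:ℝ) ^ k - 3 * ((1:ℝ) ^ k - (-1:ℝ) ^ k))) * h ^ k := by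
    simp only [Finset.mul_sum, ← Finset.sum_sub_distrib, ← Finset.sum_add_distrib]
    exact Finset.sum_congr rfl fun k _ => by ring
  rw [hR]
  -- split off the first three terms of the RHS sum
  have hsplit : ∀ g : ℕ → ℝ, (∑ k ∈ range (m + 3), g k)
      = (g 0 + g 1 + g 2) + ∑ i ∈ range m, g (3 + i) := by
    intro g
    rw [Finset.range_eq_Ico, ← Finset.sum_Ico_consecutive _ (Nat.zero_le 3) (by omega : 3 ≤ m + 3),
      Finset.sum_Ico_eq_sum_range, Finset.sum_Ico_eq_sum_range]
    norm_num [Finset.sum_range_succ, Nat.add_sub_cancel]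
  rw [hsplit]
  have h0 : (D 0 / (Nat.factorial 0 : ℝ) *
          (a / 2 * ((2:ℝ) ^ 0 - (-2:ℝ) ^ 0 - 2 * ((1:ℝ) ^ 0 - (-1:ℝ) ^ 0))
            + b / 8 * ((3:ℝ) ^ 0 - (-3:ℝ) ^ 0 - 3 * ((1:ℝ) ^ 0 - (-1:ℝ) ^ 0))) * h ^ 0
      + D 1 / (Nat.factorial 1 : ℝ) *
          (a / 2 * ((2:ℝ) ^ 1 - (-2:ℝ) ^ 1 - 2 * ((1:ℝ) ^ 1 - (-1:ℝ) ^ 1))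
            + b / 8 * ((3:ℝ) ^ 1 - (-3:ℝ) ^ 1 - 3 * ((1:ℝ) ^ 1 - (-1:ℝ) ^ 1))) * h ^ 1
      + D 2 / (Nat.factorial 2 : ℝ) *
          (a / 2 * ((2:ℝ) ^ 2 - (-2:ℝ) ^ 2 - 2 * ((1:ℝ) ^ 2 - (-1:ℝ) ^ 2))
            + b / 8 * ((3:ℝ) ^ 2 - (-3:ℝ) ^ 2 - 3 * ((1:ℝ) ^ 2 - (-1:ℝ) ^ 2))) * h ^ 2) = 0 := by
    norm_num
  rw [h0, zero_add]
  -- rewrite LHS as a single sum over range m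
  have hD3 : h ^ 3 * D 3 = ∑ j ∈ range m, (if j = 0 then h ^ 3 * D 3 else 0) := by
    rw [Finset.sum_ite_eq' (range m) 0 (fun _ => h ^ 3 * D 3),
      if_pos (Finset.mem_range.2 (by omega))]
  rw [hD3]
  simp only [Finset.mul_sum, ← Finset.sum_add_distrib]
  refine Finset.sum_congr rfl fun j hj => ?_
  rw [Finset.mem_range] at hj
  rcases Nat.even_or_odd j with ⟨l, rfl⟩ | ⟨l, rfl⟩
  · -- j = l + l even
    have e1 : (-h) ^ (l + l) = h ^ (l + l) := Even.neg_pow ⟨l, rfl⟩ h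
    have e2 : (-2:ℝ) ^ (3 + (l + l)) = -(2:ℝ) ^ (3 + (l + l)) :=
      Odd.neg_pow ⟨l + 1, by ring⟩ 2
    have e3 : (-3:ℝ) ^ (3 + (l + l)) = -(3:ℝ) ^ (3 + (l + l)) :=
      Odd.neg_pow ⟨l + 1, by ring⟩ 3
    have e4 : (-1:ℝ) ^ (3 + (l + l)) = -(1:ℝ) ^ (3 + (l + l)) :=
      Odd.neg_pow ⟨l + 1, by ring⟩ 1
    rw [e1, e2, e3, e4]
    rcases Nat.eq_zero_or_pos l with rfl | hl
    · norm_num [Nat.factorial]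
      linear_combination h ^ 3 * D 3 * hcond0
    · obtain ⟨mm, rfl⟩ := hmeven
      have hll : l + l ≠ 0 := by omega
      rw [if_neg hll]
      have hc := hcond l hl (by omega)
      have hfac : (2 * l : ℕ) = l + l := by ring
      rw [hfac] at hc
      have hp2 : (2:ℝ) ^ (2 * (l + 1)) = (2:ℝ) ^ (l + l) * 4 := by
        rw [show 2 * (l + 1) = (l + l) + 2 from by ring, pow_add]; norm_num
      have hp3 : (3:ℝ) ^ (2 * (l + 1)) = (3:ℝ) ^ (l + l) * 9 := by
        rw [show 2 * (l + 1) = (l + l) + 2 from by ring, pow_add]; norm_num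
      have hq2 : (2:ℝ) ^ (3 + (l + l)) = (2:ℝ) ^ (l + l) * 8 := by
        rw [show 3 + (l + l) = (l + l) + 3 from by ring, pow_add]; norm_num
      have hq3 : (3:ℝ) ^ (3 + (l + l)) = (3:ℝ) ^ (l + l) * 27 := by
        rw [show 3 + (l + l) = (l + l) + 3 from by ring, pow_add]; norm_num
      have hfac2 : ((l + l + 3).factorial : ℝ) = ((3 + (l + l)).factorial : ℝ) := by
        rw [show l + l + 3 = 3 + (l + l) from by ring]
      rw [hp2, hp3, hfac2] at hc
      rw [hq2, hq3]
      have hone : (1:ℝ) ^ (3 + (l + l)) = 1 := one_pow _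
      rw [hone]
      linear_combination (D (3 + (l + l)) * h ^ (3 + (l + l))) * hc
  · -- j = 2l+1 odd
    have e1 : (-h) ^ (2 * l + 1) = -h ^ (2 * l + 1) := Odd.neg_pow ⟨l, by ring⟩ h
    have e2 : (-2:ℝ) ^ (3 + (2 * l + 1)) = (2:ℝ) ^ (3 + (2 * l + 1)) :=
      Even.neg_pow ⟨l + 2, by ring⟩ 2
    have e3 : (-3:ℝ) ^ (3 + (2 * l + 1)) = (3:ℝ) ^ (3 + (2 * l + 1)) :=
      Even.neg_pow ⟨l + 2, by ring⟩ 3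
    have e4 : (-1:ℝ) ^ (3 + (2 * l + 1)) = (1:ℝ) ^ (3 + (2 * l + 1)) :=
      Even.neg_pow ⟨l + 2, by ring⟩ 1
    have hif : (if 2 * l + 1 = 0 then h ^ 3 * D 3 else 0) = 0 := by simp
    rw [e1, e2, e3, e4, hif]
    ring

set_option maxHeartbeats 1000000


/-- If the coefficients `α, a, b` satisfy `1 + 2α = a + b` and
`2α/(2l)! = [2a(2^{2(l+1)} − 1) + (3/4)b(3^{2(l+1)} − 1)]/(2l+3)!` for
`l = 1, …, m/2 − 1` (with `m ≥ 2` even), then the compact third-derivative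
scheme has order `m`: for `f ∈ C^{m+3}` the truncation error `E(h)`
satisfies `|E(h)| ≤ C |h|^m` for all small `h ≠ 0`. -/
theorem compact_third_derivative_order_m
    (m : ℕ) (hm : 2 ≤ m) (hmeven : Even m)
    (f : ℝ → ℝ) (hf : ContDiff ℝ (m + 3 : ℕ) f) (x : ℝ)
    (α a b : ℝ) (hcond0 : 1 + 2 * α = a + b)
    (hcond : ∀ l : ℕ, 1 ≤ l → l ≤ m / 2 - 1 →
      2 * α / (Nat.factorial (2 * l) : ℝ) =
        (2 * a * ((2 : ℝ) ^ (2 * (l + 1)) - 1)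
            + (3 / 4) * b * ((3 : ℝ) ^ (2 * (l + 1)) - 1)) /
          (Nat.factorial (2 * l + 3) : ℝ))
    (E : ℝ → ℝ)
    (hE : ∀ h : ℝ, h ≠ 0 → E h =
      α * (iteratedDeriv 3 f (x - h) + iteratedDeriv 3 f (x + h))
        + iteratedDeriv 3 f x
        - a * (f (x + 2 * h) - f (x - 2 * h)
            - 2 * (f (x + h) - f (x - h))) / (2 * h ^ 3)
        - b * (f (x + 3 * h) - f (x - 3 * h)
            - 3 * (f (x + h) - f (x - h))) / (8 * h ^ 3)) :
    ∃ C > 0, ∃ h₀ > 0, ∀ h : ℝ, h ≠ 0 → |h| ≤ h₀ → |E h| ≤ C * |h| ^ m := by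
  set D : ℕ → ℝ := fun k => iteratedDeriv k f x with hD
  set g : ℝ → ℝ := iteratedDeriv 3 f with hgdef
  -- Taylor remainder for f, order m+3
  obtain ⟨C1, hC10, hC1⟩ := taylor_bound 3 (by norm_num) x (m + 2) f (by exact_mod_cast hf)
  -- Taylor remainder for g = f''' , order m
  have hg : ContDiff ℝ (m : ℕ) g := by
    have := ContDiff.iterate_deriv' m 3 (f := f) (by exact_mod_cast hf)
    rwa [← iteratedDeriv_eq_iterate] at this
  obtain ⟨m', hm'⟩ : ∃ m', m = m' + 1 := ⟨m - 1, by omega⟩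
  obtain ⟨C2, hC20, hC2⟩ := taylor_bound 3 (by norm_num) x m' g
    (by rw [← hm']; exact_mod_cast hg)
  rw [← hm'] at hC2
  have hsum : ∀ t : ℝ, (∑ j ∈ range m, iteratedDeriv j g x * t ^ j / (Nat.factorial j : ℝ))
      = ∑ j ∈ range m, D (3 + j) * t ^ j / (Nat.factorial j : ℝ) := by
    intro t
    refine Finset.sum_congr rfl fun j _ => ?_
    rw [hgdef, hD]
    rw [iteratedDeriv_comp' j 3 f, show j + 3 = 3 + j from by omega]
  simp only [hsum] at hC2
  set Rf : ℝ → ℝ := fun t => f (x + t) - ∑ k ∈ range (m + 3),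
      D k * t ^ k / (Nat.factorial k : ℝ) with hRfdef
  set Rg : ℝ → ℝ := fun t => g (x + t) - ∑ j ∈ range m,
      D (3 + j) * t ^ j / (Nat.factorial j : ℝ) with hRgdef
  have hRf : ∀ t : ℝ, |t| ≤ 3 → |Rf t| ≤ C1 * |t| ^ (m + 3) := fun t ht => hC1 t ht
  have hRg : ∀ t : ℝ, |t| ≤ 3 → |Rg t| ≤ C2 * |t| ^ m := fun t ht => hC2 t ht
  -- constants
  set M : ℝ := (3:ℝ) ^ (m + 3) with hM
  have hM1 : (1:ℝ) ≤ M := one_le_pow₀ (by norm_num)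
  set K : ℝ := 2 * |α| * C2 + 3 * |a| * C1 * M + |b| * C1 * M with hK
  have hK0 : 0 ≤ K := by positivity
  refine ⟨K + 1, by positivity, 1, by norm_num, ?_⟩
  intro h hne hh1
  have hh3 : (h:ℝ) ^ 3 ≠ 0 := pow_ne_zero _ hne
  -- the exact expression for h^3 * E h
  have I := key_ident m hm hmeven α a b hcond0 hcond D h
  have hT : ∀ c : ℝ, (∑ k ∈ range (m + 3), D k * (c * h) ^ k / (Nat.factorial k : ℝ))
      = ∑ k ∈ range (m + 3), D k / (Nat.factorial k : ℝ) * (c ^ k * h ^ k) := by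
    intro c
    refine Finset.sum_congr rfl fun k _ => ?_
    rw [mul_pow]; ring
  rw [← hT 2, ← hT (-2), ← hT 1, ← hT (-1), ← hT 3, ← hT (-3)] at I
  rw [show (-2:ℝ) * h = -(2 * h) from by ring, show (-3:ℝ) * h = -(3 * h) from by ring,
    show (-1:ℝ) * h = -h from by ring, show (1:ℝ) * h = h from by ring] at I
  have expand : h ^ 3 * E h =
      α * h ^ 3 * (g (x + -h) + g (x + h)) + h ^ 3 * D 3
        - a / 2 * (f (x + 2 * h) - f (x + -(2 * h)) - 2 * (f (x + h) - f (x + -h)))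
        - b / 8 * (f (x + 3 * h) - f (x + -(3 * h)) - 3 * (f (x + h) - f (x + -h))) := by
    rw [hE h hne, show x - h = x + -h from by ring, show x - 2 * h = x + -(2 * h) from by ring,
      show x - 3 * h = x + -(3 * h) from by ring]
    field_simp
    ring
  have key : h ^ 3 * E h =
      α * h ^ 3 * (Rg (-h) + Rg h)
        - a / 2 * (Rf (2 * h) - Rf (-(2 * h)) - 2 * (Rf h - Rf (-h)))
        - b / 8 * (Rf (3 * h) - Rf (-(3 * h)) - 3 * (Rf h - Rf (-h))) := by
    rw [expand, hRfdef, hRgdef]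
    simp only []
    linear_combination I
  -- bounds on the remainders
  have bf : ∀ c : ℝ, |c| ≤ 3 → |Rf (c * h)| ≤ C1 * M * |h| ^ (m + 3) := by
    intro c hc
    have habs : |c * h| ≤ 3 := by
      rw [abs_mul]
      nlinarith [abs_nonneg c, abs_nonneg h]
    calc |Rf (c * h)| ≤ C1 * |c * h| ^ (m + 3) := hRf _ habs
      _ = C1 * (|c| ^ (m + 3) * |h| ^ (m + 3)) := by rw [abs_mul, mul_pow]
      _ ≤ C1 * (M * |h| ^ (m + 3)) := by
          rw [hM]; gcongr
      _ = C1 * M * |h| ^ (m + 3) := by ring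
  have bf2 : |Rf (2 * h)| ≤ C1 * M * |h| ^ (m + 3) := bf 2 (by norm_num)
  have bf2' : |Rf (-(2 * h))| ≤ C1 * M * |h| ^ (m + 3) := by
    rw [show -(2 * h) = (-2 : ℝ) * h from by ring]; exact bf (-2) (by norm_num)
  have bf3 : |Rf (3 * h)| ≤ C1 * M * |h| ^ (m + 3) := bf 3 (by norm_num)
  have bf3' : |Rf (-(3 * h))| ≤ C1 * M * |h| ^ (m + 3) := by
    rw [show -(3 * h) = (-3 : ℝ) * h from by ring]; exact bf (-3) (by norm_num)
  have bf1 : |Rf h| ≤ C1 * M * |h| ^ (m + 3) := by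
    simpa using bf 1 (by norm_num)
  have bf1' : |Rf (-h)| ≤ C1 * M * |h| ^ (m + 3) := by
    rw [show -h = (-1:ℝ) * h from by ring]; exact bf (-1) (by norm_num)
  have bg : |Rg h| ≤ C2 * |h| ^ m := hRg h (by linarith)
  have bg' : |Rg (-h)| ≤ C2 * |h| ^ m := by
    have := hRg (-h) (by rw [abs_neg]; linarith)
    rwa [abs_neg] at this
  -- triangle inequalities
  have tri : ∀ c u v w z : ℝ, 0 ≤ c → |u - v - c * (w - z)| ≤ |u| + |v| + c * (|w| + |z|) := by
    intro c u v w z hc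
    have h1 : |w - z| ≤ |w| + |z| := by
      rw [sub_eq_add_neg]
      exact (abs_add_le _ _).trans (by rw [abs_neg])
    have h2 : |u - v| ≤ |u| + |v| := by
      rw [sub_eq_add_neg]
      exact (abs_add_le _ _).trans (by rw [abs_neg])
    calc |u - v - c * (w - z)| ≤ |u - v| + |c * (w - z)| := by
          rw [sub_eq_add_neg]
          exact (abs_add_le _ _).trans (by rw [abs_neg])
      _ ≤ (|u| + |v|) + c * (|w| + |z|) := by
          rw [abs_mul, abs_of_nonneg hc]
          have := mul_le_mul_of_nonneg_left h1 hc
          linarith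
  have habsE : |h ^ 3 * E h| ≤ K * |h| ^ (m + 3) := by
    rw [key]
    have t1 : |α * h ^ 3 * (Rg (-h) + Rg h)| ≤ 2 * |α| * C2 * |h| ^ (m + 3) := by
      rw [abs_mul, abs_mul, abs_pow]
      calc |α| * |h| ^ 3 * |Rg (-h) + Rg h|
          ≤ |α| * |h| ^ 3 * (C2 * |h| ^ m + C2 * |h| ^ m) := by
            gcongr
            exact (abs_add_le _ _).trans (by linarith)
        _ = 2 * |α| * C2 * |h| ^ (m + 3) := by rw [pow_add]; ring
    have t2 : |a / 2 * (Rf (2 * h) - Rf (-(2 * h)) - 2 * (Rf h - Rf (-h)))|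
        ≤ 3 * |a| * C1 * M * |h| ^ (m + 3) := by
      rw [abs_mul]
      calc |a / 2| * |Rf (2 * h) - Rf (-(2 * h)) - 2 * (Rf h - Rf (-h))|
          ≤ |a| / 2 * (|Rf (2 * h)| + |Rf (-(2 * h))| + 2 * (|Rf h| + |Rf (-h)|)) := by
            rw [abs_div]
            gcongr
            · norm_num
            · exact tri 2 _ _ _ _ (by norm_num)
        _ ≤ |a| / 2 * (6 * (C1 * M * |h| ^ (m + 3))) := by
            gcongr
            linarith
        _ = 3 * |a| * C1 * M * |h| ^ (m + 3) := by ring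
    have t3 : |b / 8 * (Rf (3 * h) - Rf (-(3 * h)) - 3 * (Rf h - Rf (-h)))|
        ≤ |b| * C1 * M * |h| ^ (m + 3) := by
      rw [abs_mul]
      calc |b / 8| * |Rf (3 * h) - Rf (-(3 * h)) - 3 * (Rf h - Rf (-h))|
          ≤ |b| / 8 * (|Rf (3 * h)| + |Rf (-(3 * h))| + 3 * (|Rf h| + |Rf (-h)|)) := by
            rw [abs_div]
            gcongr
            · norm_num
            · exact tri 3 _ _ _ _ (by norm_num)
        _ ≤ |b| / 8 * (8 * (C1 * M * |h| ^ (m + 3))) := by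
            gcongr
            linarith
        _ = |b| * C1 * M * |h| ^ (m + 3) := by ring
    calc |α * h ^ 3 * (Rg (-h) + Rg h)
          - a / 2 * (Rf (2 * h) - Rf (-(2 * h)) - 2 * (Rf h - Rf (-h)))
          - b / 8 * (Rf (3 * h) - Rf (-(3 * h)) - 3 * (Rf h - Rf (-h)))|
        ≤ |α * h ^ 3 * (Rg (-h) + Rg h)|
          + |a / 2 * (Rf (2 * h) - Rf (-(2 * h)) - 2 * (Rf h - Rf (-h)))|
          + |b / 8 * (Rf (3 * h) - Rf (-(3 * h)) - 3 * (Rf h - Rf (-h)))| := by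
          rw [sub_eq_add_neg, sub_eq_add_neg]
          exact (abs_add_three _ _ _).trans (by rw [abs_neg, abs_neg])
      _ ≤ 2 * |α| * C2 * |h| ^ (m + 3) + 3 * |a| * C1 * M * |h| ^ (m + 3)
            + |b| * C1 * M * |h| ^ (m + 3) := by linarith
      _ = K * |h| ^ (m + 3) := by rw [hK]; ring
  -- divide by |h|^3
  have h3pos : (0:ℝ) < |h| ^ 3 := pow_pos (abs_pos.2 hne) 3
  have : |E h| * |h| ^ 3 ≤ K * |h| ^ m * |h| ^ 3 := by
    have e : |h ^ 3 * E h| = |E h| * |h| ^ 3 := by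
      rw [abs_mul, abs_pow]; ring
    rw [e] at habsE
    calc |E h| * |h| ^ 3 ≤ K * |h| ^ (m + 3) := habsE
      _ = K * |h| ^ m * |h| ^ 3 := by rw [pow_add]; ring
  have hEh : |E h| ≤ K * |h| ^ m := le_of_mul_le_mul_right this h3pos
  have : K * |h| ^ m ≤ (K + 1) * |h| ^ m := by
    have : (0:ℝ) ≤ |h| ^ m := by positivity
    nlinarith
  linarith
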